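/- Let Ψ : L²(𝕋ⁿ) → L²(𝕋ⁿ) be the unitary operator (Ψf)(ζ) = J(ζ)·f(τ(ζ)), where τ(ζ) = (ζ₁ζ₂⋯ζₙ, ζ₂ζ₃⋯ζₙ, …, ζ_{n−1}ζₙ, ζₙ) and J(ζ) = ∏_{j=2}^{n} ζ_j^{j−1}, and let σ(ζ) = (ζ₁/ζ₂, ζ₂/ζ₃, …, ζ_{n−1}/ζₙ, ζₙ) (so σ and τ are mutually inverse self-maps of 𝕋ⁿ). Then for every φ ∈ L^∞(𝕋ⁿ): (a) T_{φ,△ₙ} = Ψ⁻¹ ∘ T_{φ∘τ, 𝔻ⁿ} ∘ Ψ (regarding Ψ as a unitary from H²(∂_d△ₙ) onto H²(∂_d𝔻ⁿ)); and (b) T_{φ,𝔻ⁿ} = Ψ ∘ T_{φ∘σ, △ₙ} ∘ Ψ⁻¹. In particular every Toeplitz operator on H²(∂_d△ₙ) is unitarily equivalent to a Toeplitz operator on H²(∂_d𝔻ⁿ) and vice versa. -/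

import Mathlib

open MeasureTheory Filter Topology ComplexConjugate

noncomputable section

instance fact_one_pos : Fact ((0:ℝ) < 1) := ⟨one_pos⟩

abbrev Torus (n : ℕ) := Fin n → AddCircle (1 : ℝ)

abbrev L2T (n : ℕ) := Lp ℂ 2 (volume : Measure (Torus n))

abbrev LinfT (n : ℕ) := Lp ℂ ⊤ (volume : Measure (Torus n))

def char {n : ℕ} (α : Fin n → ℤ) : Torus n → ℂ := fun x => ∏ j, fourier (α j) (x j)

lemma char_continuous {n : ℕ} (α : Fin n → ℤ) : Continuous (char α) :=
  continuous_finsetProd _ fun j _ => (fourier (α j)).continuous.comp (continuous_apply j)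

lemma char_memLp {n : ℕ} (α : Fin n → ℤ) (p : ENNReal) :
    MemLp (char α) p (volume : Measure (Torus n)) := by
  refine (memLp_top_of_bound ((char_continuous α).aestronglyMeasurable) 1 ?_).mono_exponent le_top
  filter_upwards with x
  simp only [char, norm_prod]
  calc ∏ j, ‖fourier (α j) (x j)‖
      = ∏ j : Fin n, (1:ℝ) := by
        refine Finset.prod_congr rfl fun j _ => ?_
        rw [fourier_apply]; exact Circle.norm_coe _
    _ ≤ 1 := by simp

def charL2 {n : ℕ} (α : Fin n → ℤ) : L2T n := (char_memLp α 2).toLp (char α)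

def hardyT (n : ℕ) : Submodule ℂ (L2T n) :=
  (Submodule.span ℂ
    (charL2 '' {α : Fin n → ℤ | ∀ k : Fin n, 0 ≤ (∑ j ∈ Finset.Iic k, α j) + (k.val : ℤ)})).topologicalClosure

def hardyD (n : ℕ) : Submodule ℂ (L2T n) :=
  (Submodule.span ℂ (charL2 '' {α : Fin n → ℤ | ∀ j, 0 ≤ α j})).topologicalClosure

instance hardyT.completeSpace (n : ℕ) : CompleteSpace (hardyT n) :=
  (Submodule.isClosed_topologicalClosure _).completeSpace_coe

instance hardyD.completeSpace (n : ℕ) : CompleteSpace (hardyD n) :=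
  (Submodule.isClosed_topologicalClosure _).completeSpace_coe

def IsToeplitzOn {n : ℕ} (K : Submodule ℂ (L2T n)) (φ : Torus n → ℂ) (T : K →L[ℂ] K) : Prop :=
  ∀ f g : K,
    (inner ℂ ((g : L2T n)) ((T f : L2T n)) : ℂ) =
      ∫ x, conj ((g : L2T n) x) * (φ x * (f : L2T n) x) ∂volume

def IsCoordMult {n : ℕ} (j : Fin n) (M : hardyT n →L[ℂ] hardyT n) : Prop :=
  ∀ f : hardyT n,
    ((M f : L2T n) : Torus n → ℂ) =ᵐ[volume]
      fun x => fourier 1 (x j) * ((f : L2T n) : Torus n → ℂ) x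

def IsHankelT {n : ℕ} (φ : Torus n → ℂ) (H : hardyT n →L[ℂ] L2T n) : Prop :=
  (∀ f : hardyT n, H f ∈ (hardyT n)ᗮ) ∧
    ∀ f : hardyT n, ∀ g : L2T n, g ∈ (hardyT n)ᗮ →
      (inner ℂ g (H f) : ℂ) = ∫ x, conj (g x) * (φ x * (f : L2T n) x) ∂volume

def IsAnalyticSymbolF {n : ℕ} (φ : Torus n → ℂ) : Prop :=
  ∀ α : Fin n → ℤ, (¬ ∀ k : Fin n, 0 ≤ ∑ j ∈ Finset.Iic k, α j) →
    ∫ x, φ x * char (-α) x ∂(volume : Measure (Torus n)) = 0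

def IsInnerSymbolF {n : ℕ} (φ : Torus n → ℂ) : Prop :=
  IsAnalyticSymbolF φ ∧ ∀ᵐ x ∂(volume : Measure (Torus n)), ‖φ x‖ = 1

def tauMap {n : ℕ} (x : Torus n) : Torus n := fun j => ∑ k ∈ Finset.Ici j, x k

def sigmaMap {n : ℕ} (x : Torus n) : Torus n :=
  fun j => if h : (j : ℕ) + 1 < n then x j - x ⟨(j : ℕ) + 1, h⟩ else x j

def jacF {n : ℕ} (x : Torus n) : ℂ := ∏ j : Fin n, fourier (j.val : ℤ) (x j)

def jacInvF {n : ℕ} (x : Torus n) : ℂ :=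
  ∏ j : Fin n, fourier (if j.val = 0 then (0 : ℤ) else -1) (x j)


namespace Stmt9Aux

variable {n : ℕ}

lemma Ici_insert {j : Fin n} (h : (j:ℕ)+1 < n) :
    Finset.Ici j = insert j (Finset.Ici (⟨(j:ℕ)+1, h⟩ : Fin n)) := by
  ext k
  simp only [Finset.mem_Ici, Finset.mem_insert, Fin.le_def, Fin.ext_iff]
  omega

lemma Ici_last {j : Fin n} (h : ¬ ((j:ℕ)+1 < n)) : Finset.Ici j = {j} := by
  ext k
  simp only [Finset.mem_Ici, Finset.mem_singleton, Fin.le_def, Fin.ext_iff]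
  omega

lemma sigma_tau (x : Torus n) : sigmaMap (tauMap x) = x := by
  funext j
  by_cases h : (j:ℕ)+1 < n
  · simp only [sigmaMap, tauMap, dif_pos h]
    rw [Ici_insert h, Finset.sum_insert (by simp [Fin.lt_def])]
    abel
  · simp only [sigmaMap, tauMap, dif_neg h, Ici_last h, Finset.sum_singleton]

lemma tau_sigma (x : Torus n) : tauMap (sigmaMap x) = x := by
  funext j
  show ∑ k ∈ Finset.Ici j, sigmaMap x k = x j
  obtain ⟨m, hm⟩ : ∃ m, n - 1 - (j:ℕ) = m := ⟨_, rfl⟩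
  induction m generalizing j with
  | zero =>
    have h : ¬ ((j:ℕ)+1 < n) := by omega
    rw [Ici_last h, Finset.sum_singleton, sigmaMap, dif_neg h]
  | succ m ih =>
    have h : (j:ℕ)+1 < n := by omega
    rw [Ici_insert h, Finset.sum_insert (by simp [Fin.lt_def]),
      ih (j := ⟨(j:ℕ)+1, h⟩) (by simp; omega)]
    show sigmaMap x j + _ = _
    rw [sigmaMap, dif_pos h]
    abel

lemma tau_add (x y : Torus n) : tauMap (x + y) = tauMap x + tauMap y := by
  funext j
  simp [tauMap, Finset.sum_add_distrib]

lemma tau_continuous : Continuous (tauMap (n := n)) := by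
  refine continuous_pi fun j => ?_
  exact continuous_finset_sum _ fun k _ => continuous_apply k

instance : IsProbabilityMeasure (volume : Measure (AddCircle (1:ℝ))) :=
  ⟨by rw [AddCircle.measure_univ]; simp⟩

lemma sigma_continuous : Continuous (sigmaMap (n := n)) := by
  refine continuous_pi fun j => ?_
  unfold sigmaMap
  by_cases h : (j:ℕ)+1 < n
  · simp only [dif_pos h]
    exact (continuous_apply j).sub (continuous_apply _)
  · simp only [dif_neg h]
    exact continuous_apply j

def tauEquiv : Torus n ≃+ Torus n where
  toFun := tauMap
  invFun := sigmaMap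
  left_inv := sigma_tau
  right_inv := tau_sigma
  map_add' := tau_add

def tauHomeo : Torus n ≃ₜ Torus n where
  toEquiv := (tauEquiv (n := n)).toEquiv
  continuous_toFun := tau_continuous
  continuous_invFun := sigma_continuous

instance : Measure.IsAddHaarMeasure (volume : Measure (Torus n)) := by
  refine Measure.isAddHaarMeasure_of_isCompact_nonempty_interior volume Set.univ
    isCompact_univ ⟨0, by simp⟩ (by simp) (by simp)

lemma tau_measurePreserving : MeasurePreserving (tauMap (n := n)) volume volume := by
  refine ⟨tau_continuous.measurable, ?_⟩
  have : Measure.IsAddHaarMeasure ((volume : Measure (Torus n)).map tauMap) :=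
    (tauEquiv (n := n)).isAddHaarMeasure_map volume tau_continuous sigma_continuous
  have hp : IsProbabilityMeasure ((volume : Measure (Torus n)).map tauMap) :=
    Measure.isProbabilityMeasure_map tau_continuous.measurable.aemeasurable
  exact Measure.isAddHaarMeasure_eq_of_isProbabilityMeasure _ _

lemma fourier_pt_add {T : ℝ} [hT : Fact (0 < T)] (m : ℤ) (x y : AddCircle T) :
    (fourier m (x + y) : ℂ) = fourier m x * fourier m y := by
  simp_rw [fourier_apply, smul_add, AddCircle.toCircle_add, Circle.coe_mul]

lemma fourier_pt_sum {T : ℝ} [hT : Fact (0 < T)] (m : ℤ) {ι : Type*} (s : Finset ι)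
    (x : ι → AddCircle T) :
    (fourier m (∑ k ∈ s, x k) : ℂ) = ∏ k ∈ s, fourier m (x k) := by
  induction s using Finset.cons_induction with
  | empty => simp
  | cons a s ha ih => rw [Finset.sum_cons, Finset.prod_cons, fourier_pt_add, ih]

lemma fourier_sum_exp {T : ℝ} [hT : Fact (0 < T)] {ι : Type*} (s : Finset ι) (m : ι → ℤ)
    (x : AddCircle T) :
    (fourier (∑ j ∈ s, m j) x : ℂ) = ∏ j ∈ s, fourier (m j) x := by
  induction s using Finset.cons_induction with
  | empty => simp
  | cons a s ha ih => rw [Finset.sum_cons, Finset.prod_cons, fourier_add, ih]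

def betaF (α : Fin n → ℤ) : Fin n → ℤ := fun k => (∑ j ∈ Finset.Iic k, α j) + k

lemma jac_char_tau (α : Fin n → ℤ) (x : Torus n) :
    jacF x * char α (tauMap x) = char (betaF α) x := by
  have h1 : char α (tauMap x) = ∏ k : Fin n, fourier (∑ j ∈ Finset.Iic k, α j) (x k) := by
    unfold char tauMap
    calc (∏ j : Fin n, (fourier (α j) (∑ k ∈ Finset.Ici j, x k) : ℂ))
        = ∏ j : Fin n, ∏ k ∈ Finset.Ici j, (fourier (α j) (x k) : ℂ) :=
          Finset.prod_congr rfl fun j _ => fourier_pt_sum _ _ _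
      _ = ∏ k : Fin n, ∏ j ∈ Finset.Iic k, (fourier (α j) (x k) : ℂ) := by
          refine Finset.prod_comm' fun j k => ?_
          simp [Finset.mem_Ici, Finset.mem_Iic]
      _ = ∏ k : Fin n, (fourier (∑ j ∈ Finset.Iic k, α j) (x k) : ℂ) :=
          Finset.prod_congr rfl fun k _ => (fourier_sum_exp _ _ _).symm
  rw [h1, jacF, ← Finset.prod_mul_distrib]
  unfold char betaF
  refine Finset.prod_congr rfl fun k _ => ?_
  rw [add_comm (∑ j ∈ Finset.Iic k, α j) (k : ℤ), fourier_add]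

lemma jac_norm (x : Torus n) : conj (jacF x) * jacF x = 1 := by
  unfold jacF
  rw [map_prod, ← Finset.prod_mul_distrib]
  refine Finset.prod_eq_one fun j _ => ?_
  rw [fourier_apply, ← Complex.normSq_eq_conj_mul_self, Circle.normSq_coe,
    Complex.ofReal_one]

lemma Iic_insert {k : Fin n} (h : 0 < (k:ℕ)) :
    Finset.Iic k = insert k (Finset.Iic (⟨(k:ℕ)-1, by omega⟩ : Fin n)) := by
  ext j
  simp only [Finset.mem_Iic, Finset.mem_insert, Fin.le_def, Fin.ext_iff]
  omega

lemma Iic_zero {k : Fin n} (h : (k:ℕ) = 0) : Finset.Iic k = {k} := by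
  ext j
  simp only [Finset.mem_Iic, Finset.mem_singleton, Fin.le_def, Fin.ext_iff]
  omega

def alphaF (β : Fin n → ℤ) : Fin n → ℤ :=
  fun k => if h : (k:ℕ) = 0 then β k else β k - β ⟨(k:ℕ)-1, by omega⟩ - 1

lemma sum_alphaF (β : Fin n → ℤ) (k : Fin n) :
    ∑ j ∈ Finset.Iic k, alphaF β j = β k - k := by
  obtain ⟨m, hm⟩ : ∃ m, (k:ℕ) = m := ⟨_, rfl⟩
  induction m generalizing k with
  | zero =>
    rw [Iic_zero hm, Finset.sum_singleton, alphaF, dif_pos hm, hm]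
    simp [hm]
  | succ m ih =>
    have h0 : 0 < (k:ℕ) := by omega
    rw [Iic_insert h0, Finset.sum_insert (by simp [Fin.lt_def]; omega),
      ih (k := ⟨(k:ℕ)-1, by omega⟩) (by simp; omega)]
    rw [alphaF, dif_neg (by omega)]
    simp only []
    push_cast
    omega

lemma betaF_alphaF (β : Fin n → ℤ) : betaF (alphaF β) = β := by
  funext k
  rw [betaF, sum_alphaF]
  ring

section Psi

variable (Ψ : L2T n ≃ₗᵢ[ℂ] L2T n)
    (hΨ : ∀ f : L2T n, (⇑(Ψ f) : Torus n → ℂ) =ᵐ[volume] fun x => jacF x * f (tauMap x))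

include hΨ

lemma psi_char (α : Fin n → ℤ) : Ψ (charL2 α) = charL2 (betaF α) := by
  apply MeasureTheory.Lp.ext
  have h2 : (fun x => (charL2 α : Torus n → ℂ) (tauMap x)) =ᵐ[volume]
      fun x => char α (tauMap x) :=
    tau_measurePreserving.quasiMeasurePreserving.ae_eq (MemLp.coeFn_toLp _)
  have h3 : (fun x => jacF x * (charL2 α : Torus n → ℂ) (tauMap x)) =ᵐ[volume]
      char (betaF α) := by
    filter_upwards [h2] with x hx
    show jacF x * (charL2 α : Torus n → ℂ) (tauMap x) = char (betaF α) x
    rw [hx, jac_char_tau]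
  exact (hΨ (charL2 α)).trans (h3.trans (MemLp.coeFn_toLp _).symm)

lemma psi_mem_hardyD {f : L2T n} (hf : f ∈ hardyT n) : Ψ f ∈ hardyD n := by
  set S := charL2 '' {α : Fin n → ℤ |
    ∀ k : Fin n, 0 ≤ (∑ j ∈ Finset.Iic k, α j) + (k.val : ℤ)} with hS
  have himg : ⇑Ψ '' ↑(Submodule.span ℂ S) ⊆ ↑(hardyD n) := by
    rintro _ ⟨x, hx, rfl⟩
    induction hx using Submodule.span_induction with
    | mem z hz =>
      obtain ⟨α, hα, rfl⟩ := hz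
      rw [psi_char Ψ hΨ]
      exact Submodule.le_topologicalClosure _ (Submodule.subset_span ⟨betaF α, hα, rfl⟩)
    | zero => simpa using (hardyD n).zero_mem
    | add a b _ _ ha hb => rw [map_add]; exact (hardyD n).add_mem ha hb
    | smul c a _ ha => rw [_root_.map_smul]; exact (hardyD n).smul_mem c ha
  have h1 : Ψ f ∈ closure (⇑Ψ '' ↑(Submodule.span ℂ S)) := by
    apply image_closure_subset_closure_image Ψ.continuous
    exact ⟨f, hf, rfl⟩
  exact closure_minimal himg (Submodule.isClosed_topologicalClosure _) h1

lemma psi_symm_char (β : Fin n → ℤ) : Ψ.symm (charL2 β) = charL2 (alphaF β) := by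
  have h := psi_char Ψ hΨ (alphaF β)
  rw [betaF_alphaF] at h
  rw [← h, Ψ.symm_apply_apply]

lemma psi_symm_mem_hardyT {g : L2T n} (hg : g ∈ hardyD n) : Ψ.symm g ∈ hardyT n := by
  set S := charL2 '' {α : Fin n → ℤ | ∀ j, 0 ≤ α j} with hS
  have himg : ⇑Ψ.symm '' ↑(Submodule.span ℂ S) ⊆ ↑(hardyT n) := by
    rintro _ ⟨x, hx, rfl⟩
    induction hx using Submodule.span_induction with
    | mem z hz =>
      obtain ⟨β, hβ, rfl⟩ := hz
      rw [psi_symm_char Ψ hΨ]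
      refine Submodule.le_topologicalClosure _ (Submodule.subset_span ⟨alphaF β, ?_, rfl⟩)
      intro k
      rw [sum_alphaF]
      have := hβ k
      omega
    | zero => simpa using (hardyT n).zero_mem
    | add a b _ _ ha hb => rw [map_add]; exact (hardyT n).add_mem ha hb
    | smul c a _ ha => rw [_root_.map_smul]; exact (hardyT n).smul_mem c ha
  have h1 : Ψ.symm g ∈ closure (⇑Ψ.symm '' ↑(Submodule.span ℂ S)) := by
    apply image_closure_subset_closure_image Ψ.symm.continuous
    exact ⟨g, hg, rfl⟩
  exact closure_minimal himg (Submodule.isClosed_topologicalClosure _) h1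

lemma main_key (ψ : Torus n → ℂ)
    (A : hardyT n →L[ℂ] hardyT n) (hA : IsToeplitzOn (hardyT n) ψ A)
    (B : hardyD n →L[ℂ] hardyD n) (hB : IsToeplitzOn (hardyD n) (fun x => ψ (tauMap x)) B)
    (f : hardyT n) (g : hardyD n) (hg : (g : L2T n) = Ψ f) :
    Ψ ((A f : L2T n)) = ((B g : L2T n)) := by
  refine ext_inner_left ℂ fun v => ?_
  set vD : L2T n := (Submodule.orthogonalProjection (hardyD n) v : L2T n) with hvD
  have hvDmem : vD ∈ hardyD n := SetLike.coe_mem _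
  have hvP : v - vD ∈ (hardyD n)ᗮ := Submodule.sub_starProjection_mem_orthogonal (K := hardyD n) v
  have hAf : Ψ ((A f : L2T n)) ∈ hardyD n := psi_mem_hardyD Ψ hΨ (A f).2
  have hBg : ((B g : L2T n)) ∈ hardyD n := (B g).2
  have hsplit : ∀ u : L2T n, u ∈ hardyD n → (inner ℂ v u : ℂ) = inner ℂ vD u := by
    intro u hu
    have hv : vD + (v - vD) = v := by abel
    rw [← hv, inner_add_left, (Submodule.mem_orthogonal' _ _).1 hvP u hu, add_zero]
  rw [hsplit _ hAf, hsplit _ hBg]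
  -- core computation
  set h' : L2T n := Ψ.symm vD with hh'def
  have hh'mem : h' ∈ hardyT n := psi_symm_mem_hardyT Ψ hΨ hvDmem
  have hΨh' : Ψ h' = vD := Ψ.apply_symm_apply vD
  have hL : (inner ℂ vD (Ψ ((A f : L2T n))) : ℂ) =
      ∫ x, conj (h' x) * (ψ x * (f : L2T n) x) ∂volume := by
    rw [← hΨh', Ψ.inner_map_map]
    exact hA f ⟨h', hh'mem⟩
  have hR : (inner ℂ vD ((B g : L2T n)) : ℂ) =
      ∫ x, conj (vD x) * (ψ (tauMap x) * (g : L2T n) x) ∂volume :=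
    hB g ⟨vD, hvDmem⟩
  rw [hL, hR]
  have hemb : MeasurableEmbedding (tauMap (n := n)) :=
    (tauHomeo (n := n)).toMeasurableEquiv.measurableEmbedding
  have hint := tau_measurePreserving.integral_comp hemb
    (fun y => conj (h' y) * (ψ y * (f : L2T n) y))
  rw [← hint]
  refine integral_congr_ae ?_
  have hgae : (⇑(g : L2T n) : Torus n → ℂ) =ᵐ[volume]
      fun x => jacF x * (f : L2T n) (tauMap x) := by
    rw [hg]; exact hΨ (f : L2T n)
  have hvDae : (⇑vD : Torus n → ℂ) =ᵐ[volume]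
      fun x => jacF x * h' (tauMap x) := by
    rw [← hΨh']; exact hΨ h'
  filter_upwards [hgae, hvDae] with x hgx hvx
  show conj (h' (tauMap x)) * (ψ (tauMap x) * (f : L2T n) (tauMap x)) = _
  rw [hgx, hvx, map_mul]
  have hj := jac_norm x
  symm
  calc conj (jacF x) * conj (h' (tauMap x)) *
        (ψ (tauMap x) * (jacF x * (f : L2T n) (tauMap x)))
      = (conj (jacF x) * jacF x) *
        (conj (h' (tauMap x)) * (ψ (tauMap x) * (f : L2T n) (tauMap x))) := by ring
    _ = conj (h' (tauMap x)) * (ψ (tauMap x) * (f : L2T n) (tauMap x)) := by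
        rw [hj, one_mul]

end Psi

end Stmt9Aux

/-- Main theorem: `T_{φ,△ₙ} = Ψ⁻¹ T_{φ∘τ,𝔻ⁿ} Ψ` and `T_{φ,𝔻ⁿ} = Ψ T_{φ∘σ,△ₙ} Ψ⁻¹`. -/
theorem stmt9 {n : ℕ} (hn : 2 ≤ n) (Ψ : L2T n ≃ₗᵢ[ℂ] L2T n)
    (hΨ : ∀ f : L2T n, (⇑(Ψ f) : Torus n → ℂ) =ᵐ[volume] fun x => jacF x * f (tauMap x))
    (φ : LinfT n)
    (Tt : hardyT n →L[ℂ] hardyT n) (hTt : IsToeplitzOn (hardyT n) (⇑φ) Tt)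
    (Td : hardyD n →L[ℂ] hardyD n) (hTd : IsToeplitzOn (hardyD n) (fun x => φ (tauMap x)) Td)
    (Tt' : hardyT n →L[ℂ] hardyT n) (hTt' : IsToeplitzOn (hardyT n) (fun x => φ (sigmaMap x)) Tt')
    (Td' : hardyD n →L[ℂ] hardyD n) (hTd' : IsToeplitzOn (hardyD n) (⇑φ) Td') :
    (∀ (f : hardyT n) (g : hardyD n), (g : L2T n) = Ψ f →
        Ψ ((Tt f : L2T n)) = ((Td g : L2T n))) ∧
    (∀ (f : hardyD n) (g : hardyT n), (g : L2T n) = Ψ.symm f →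
        Ψ.symm ((Td' f : L2T n)) = ((Tt' g : L2T n))) := by
  constructor
  · intro f g hg
    exact Stmt9Aux.main_key Ψ hΨ (⇑φ) Tt hTt Td hTd f g hg
  · intro f g hg
    have hTd'' : IsToeplitzOn (hardyD n)
        (fun x => (fun y => φ (sigmaMap y)) (tauMap x)) Td' := by
      have : (fun x => (fun y => φ (sigmaMap y)) (tauMap x)) = ⇑φ := by
        funext x
        show φ (sigmaMap (tauMap x)) = φ x
        rw [Stmt9Aux.sigma_tau]
      rw [this]
      exact hTd'
    have hg' : (f : L2T n) = Ψ (g : L2T n) := by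
      rw [hg, Ψ.apply_symm_apply]
    have := Stmt9Aux.main_key Ψ hΨ (fun y => φ (sigmaMap y)) Tt' hTt' Td' hTd'' g f hg'
    rw [← this, Ψ.symm_apply_apply]
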